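/- The necessity direction of the feasibility condition: if nonnegative frequencies f_{n,m} (1 ≤ n ≤ N, n+1 ≤ m ≤ N+1) satisfy ∑_{n=1}^{m−1} f_{n,m} ≤ F_max for all m and ∑_{m=n+1}^{N+1} f_{n,m}·Δt_m ≥ F_n for all n, then for every k ∈ {1,…,N}: ∑_{i=k}^{N} F_i ≤ F_max · ∑_{i=k+1}^{N+1} Δt_i. -/

import Mathlib

/-- Necessity direction of the feasibility condition: a feasible allocation
implies ∑_{i=k}^{N} F_i ≤ F_max · ∑_{i=k+1}^{N+1} Δt_i for every k. -/
theorem stmt_7 (N : ℕ) (hN : 1 ≤ N) (Fmax : ℝ) (F Δt : ℕ → ℝ)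
    (hF : ∀ n ∈ Finset.Icc 1 N, 0 < F n)
    (hΔt : ∀ m ∈ Finset.Icc 2 (N + 1), 0 < Δt m)
    (f : ℕ → ℕ → ℝ)
    (hf0 : ∀ n ∈ Finset.Icc 1 N, ∀ m ∈ Finset.Icc (n + 1) (N + 1), 0 ≤ f n m)
    (hcap : ∀ m ∈ Finset.Icc 2 (N + 1), ∑ n ∈ Finset.Icc 1 (m - 1), f n m ≤ Fmax)
    (hcomp : ∀ n ∈ Finset.Icc 1 N,
      F n ≤ ∑ m ∈ Finset.Icc (n + 1) (N + 1), f n m * Δt m) :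
    ∀ k ∈ Finset.Icc 1 N,
      ∑ i ∈ Finset.Icc k N, F i ≤ Fmax * ∑ i ∈ Finset.Icc (k + 1) (N + 1), Δt i := by
  intro k hk
  rw [Finset.mem_Icc] at hk
  obtain ⟨hk1, hkN⟩ := hk
  set g : ℕ → ℕ → ℝ := fun i m => if i + 1 ≤ m then f i m else 0 with hg
  have hsub : ∀ i, k ≤ i → i ≤ N → Finset.Icc (i+1) (N+1) ⊆ Finset.Icc (k+1) (N+1) := by
    intro i hki _ m hm
    rw [Finset.mem_Icc] at hm ⊢
    omega
  have hmem1 : ∀ i, k ≤ i → i ≤ N → i ∈ Finset.Icc 1 N := by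
    intro i h1 h2; rw [Finset.mem_Icc]; omega
  calc ∑ i ∈ Finset.Icc k N, F i
      ≤ ∑ i ∈ Finset.Icc k N, ∑ m ∈ Finset.Icc (i+1) (N+1), f i m * Δt m := by
        apply Finset.sum_le_sum
        intro i hi
        rw [Finset.mem_Icc] at hi
        exact hcomp i (hmem1 i hi.1 hi.2)
    _ = ∑ i ∈ Finset.Icc k N, ∑ m ∈ Finset.Icc (k+1) (N+1), g i m * Δt m := by
        apply Finset.sum_congr rfl
        intro i hi
        rw [Finset.mem_Icc] at hi
        have e1 : ∑ m ∈ Finset.Icc (i+1) (N+1), f i m * Δt m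
            = ∑ m ∈ Finset.Icc (i+1) (N+1), g i m * Δt m := by
          apply Finset.sum_congr rfl
          intro m hm
          rw [Finset.mem_Icc] at hm
          simp only [hg, if_pos hm.1]
        rw [e1]
        apply Finset.sum_subset (hsub i hi.1 hi.2)
        intro m hm hnm
        rw [Finset.mem_Icc] at hm hnm
        have : ¬ (i + 1 ≤ m) := by omega
        simp only [hg, if_neg this, zero_mul]
    _ = ∑ m ∈ Finset.Icc (k+1) (N+1), (∑ i ∈ Finset.Icc k N, g i m) * Δt m := by
        rw [Finset.sum_comm]
        apply Finset.sum_congr rfl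
        intro m _
        rw [Finset.sum_mul]
    _ ≤ ∑ m ∈ Finset.Icc (k+1) (N+1), Fmax * Δt m := by
        apply Finset.sum_le_sum
        intro m hm
        rw [Finset.mem_Icc] at hm
        have hm2 : m ∈ Finset.Icc 2 (N+1) := by rw [Finset.mem_Icc]; omega
        apply mul_le_mul_of_nonneg_right _ (le_of_lt (hΔt m hm2))
        have h1 : ∑ i ∈ Finset.Icc k N, g i m ≤ ∑ i ∈ Finset.Icc 1 N, g i m := by
          apply Finset.sum_le_sum_of_subset_of_nonneg
          · intro i hi; rw [Finset.mem_Icc] at hi ⊢; omega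
          · intro i hi _
            rw [Finset.mem_Icc] at hi
            by_cases h : i + 1 ≤ m
            · simp only [hg, if_pos h]
              apply hf0 i (by rw [Finset.mem_Icc]; omega)
              rw [Finset.mem_Icc]; omega
            · simp only [hg, if_neg h, le_refl]
        have h2 : ∑ i ∈ Finset.Icc 1 N, g i m = ∑ i ∈ Finset.Icc 1 (m-1), f i m := by
          rw [← Finset.sum_subset (show Finset.Icc 1 (m-1) ⊆ Finset.Icc 1 N by
                intro i hi; rw [Finset.mem_Icc] at hi ⊢; omega)]
          · apply Finset.sum_congr rfl
            intro i hi
            rw [Finset.mem_Icc] at hi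
            have : i + 1 ≤ m := by omega
            simp only [hg, if_pos this]
          · intro i hi hni
            rw [Finset.mem_Icc] at hi hni
            have : ¬ (i + 1 ≤ m) := by omega
            simp only [hg, if_neg this]
        calc ∑ i ∈ Finset.Icc k N, g i m ≤ ∑ i ∈ Finset.Icc 1 (m-1), f i m := by
              rw [← h2]; exact h1
          _ ≤ Fmax := hcap m hm2
    _ = Fmax * ∑ i ∈ Finset.Icc (k+1) (N+1), Δt i := by rw [Finset.mul_sum]
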